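/- Let f be a finitely supported probability distribution on the nonnegative integers, and define its thinning T_t f(k) = Σ_{l≥0} C(l,k) t^k (1−t)^{l−k} f(l) for t ∈ [0,1]. Define g_t(k) = −Σ_{l≤k} ∂/∂t f_t(l) and h_t(k) = −Σ_{l≤k} ∂/∂t g_t(l) where f_t = T_t f. Then for every integer k, f_t(k)·h_t(k−1) = g_t(k)·g_t(k−1). -/

import Mathlib

open scoped BigOperators

noncomputable section

private def Pb (l K : ℕ) (s : ℝ) : ℝ := (l.choose K : ℝ) * s ^ K * (1 - s) ^ (l - K)

private lemma nat_id1 (l K : ℕ) (hK : 1 ≤ K) : K * l.choose K = l * (l-1).choose (K-1) := by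
  cases l with
  | zero => simp [Nat.choose_eq_zero_of_lt (by omega : (0:ℕ) < K)]
  | succ n =>
    cases K with
    | zero => omega
    | succ m =>
      simp only [Nat.succ_sub_one]
      rw [mul_comm, ← Nat.add_one_mul_choose_eq n m, mul_comm]

private lemma nat_id2 (l K : ℕ) : (l - K) * l.choose K = l * (l-1).choose K := by
  cases l with
  | zero => simp
  | succ n =>
    simp only [Nat.succ_sub_one]
    calc (n + 1 - K) * (n+1).choose K = (n+1).choose K * (n + 1 - K) := mul_comm _ _
      _ = (n+1).choose (K+1) * (K+1) := (Nat.choose_succ_right_eq _ _).symm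
      _ = (n+1) * n.choose K := (Nat.add_one_mul_choose_eq n K).symm

private lemma cast_id1 (l K : ℕ) (hK : 1 ≤ K) :
    (K : ℝ) * l.choose K = l * (l-1).choose (K-1) := by
  exact_mod_cast congrArg (Nat.cast : ℕ → ℝ) (nat_id1 l K hK)

private lemma hasDerivAt_Pb (l K : ℕ) (t : ℝ) :
    HasDerivAt (fun s => Pb l K s)
      ((l.choose K : ℝ) * ((K:ℝ) * t^(K-1) * (1-t)^(l-K) - ((l-K : ℕ):ℝ) * t^K * (1-t)^(l-K-1))) t := by
  have h1 : HasDerivAt (fun s : ℝ => s ^ K) ((K:ℝ) * t^(K-1)) t := hasDerivAt_pow K t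
  have h2 : HasDerivAt (fun s : ℝ => (1-s) ^ (l-K)) (((l-K:ℕ):ℝ) * (1-t)^(l-K-1) * (-1)) t :=
    ((hasDerivAt_id t).const_sub 1).pow (l-K)
  have h3 := (h1.mul h2).const_mul ((l.choose K : ℝ))
  have e : (fun s => Pb l K s) = fun y => (l.choose K : ℝ) * ((fun s : ℝ => s ^ K) * fun s : ℝ => (1 - s) ^ (l - K)) y := by
    funext s; simp [Pb]; ring
  rw [e]
  refine h3.congr_deriv ?_
  ring

private lemma deriv_Pb (l K : ℕ) (t : ℝ) :
    deriv (fun s => Pb l K s) t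
      = (l:ℝ) * ((if 1 ≤ K then Pb (l-1) (K-1) t else 0) - Pb (l-1) K t) := by
  rw [(hasDerivAt_Pb l K t).deriv]
  by_cases hK : 1 ≤ K
  · rw [if_pos hK]
    have e1 : (l-1) - (K-1) = l - K := by omega
    have e2 : (l-1) - K = l - K - 1 := by omega
    have c1 := cast_id1 l K hK
    have c2 : ((l-K:ℕ):ℝ) * l.choose K = l * (l-1).choose K := by
      exact_mod_cast congrArg (Nat.cast : ℕ → ℝ) (nat_id2 l K)
    simp only [Pb, e1, e2]
    linear_combination t^(K-1)*(1-t)^(l-K) * c1 - t^K*(1-t)^(l-K-1) * c2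
  · have hK0 : K = 0 := by omega
    subst hK0
    simp only [if_neg hK, Pb, Nat.sub_zero, Nat.choose_zero_right, Nat.cast_one, pow_zero]
    ring

private lemma sum_deriv_Pb (l K : ℕ) (t : ℝ) :
    ∑ j ∈ Finset.range (K+1), deriv (fun s => Pb l j s) t = -((l:ℝ) * Pb (l-1) K t) := by
  simp only [deriv_Pb]
  rw [Finset.sum_range_succ']
  have : ∀ j, (l:ℝ) * ((if 1 ≤ j + 1 then Pb (l-1) (j+1-1) t else 0) - Pb (l-1) (j+1) t)
      = (l:ℝ) * (Pb (l-1) j t - Pb (l-1) (j+1) t) := by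
    intro j; rw [if_pos (by omega)]; norm_num
  simp only [this]
  rw [← Finset.mul_sum, Finset.sum_range_sub' (fun j => Pb (l-1) j t) K]
  rw [if_neg (by omega)]
  ring

private lemma sum_Icc_toNat (A : ℤ → ℝ) (k : ℤ) (hk : 0 ≤ k) :
    ∑ j ∈ Finset.Icc (0:ℤ) k, A j = ∑ j ∈ Finset.range (k.toNat+1), A (j : ℤ) := by
  apply Finset.sum_nbij' (i := fun j : ℤ => j.toNat) (j := fun n : ℕ => (n : ℤ)) <;>
    intros a ha <;> simp_all [Finset.mem_Icc, Finset.mem_range] <;> omega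

theorem thinning_benamou_brenier
    (N : ℕ) (f : ℕ → ℝ)
    (hf : ∀ l, 0 ≤ f l)
    (hsupp : ∀ l, N ≤ l → f l = 0)
    (hsum : ∑ l ∈ Finset.range N, f l = 1)
    (ft : ℝ → ℤ → ℝ)
    (hft : ∀ t (k : ℤ), ft t k =
      if k < 0 then 0 else
        ∑ l ∈ Finset.range N,
          (l.choose k.toNat : ℝ) * t ^ k.toNat * (1 - t) ^ (l - k.toNat) * f l)
    (g h : ℝ → ℤ → ℝ)
    (hg : ∀ t (k : ℤ), g t k = -∑ l ∈ Finset.Icc (0 : ℤ) k, deriv (fun s => ft s l) t)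
    (hh : ∀ t (k : ℤ), h t k = -∑ l ∈ Finset.Icc (0 : ℤ) k, deriv (fun s => g s l) t)
    (t : ℝ) (ht : t ∈ Set.Icc (0 : ℝ) 1) (k : ℤ) :
    ft t k * h t (k - 1) = g t k * g t (k - 1) := by
  -- closed form for ft as a function of s
  have hft_fun : ∀ j : ℤ, 0 ≤ j →
      (fun s => ft s j) = (fun s => ∑ l ∈ Finset.range N, Pb l j.toNat s * f l) := by
    intro j hj; funext s
    rw [hft]; rw [if_neg (by omega)]
    simp [Pb]
  -- derivative of ft
  have hderiv_ft : ∀ (x : ℝ) (j : ℤ), 0 ≤ j →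
      deriv (fun s => ft s j) x
        = ∑ l ∈ Finset.range N, deriv (fun s => Pb l j.toNat s) x * f l := by
    intro x j hj
    rw [hft_fun j hj]
    have hD : HasDerivAt (fun s => ∑ l ∈ Finset.range N, Pb l j.toNat s * f l)
        (∑ l ∈ Finset.range N,
          ((l.choose j.toNat : ℝ) * ((j.toNat:ℝ) * x^(j.toNat-1) * (1-x)^(l-j.toNat)
            - ((l-j.toNat : ℕ):ℝ) * x^j.toNat * (1-x)^(l-j.toNat-1))) * f l) x :=
      HasDerivAt.fun_sum (fun l _ => (hasDerivAt_Pb l j.toNat x).mul_const (f l))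
    rw [hD.deriv]
    exact Finset.sum_congr rfl fun l _ => by rw [(hasDerivAt_Pb l j.toNat x).deriv]
  -- closed form for g
  have hg_closed : ∀ (x : ℝ) (j : ℤ), 0 ≤ j →
      g x j = ∑ m ∈ Finset.range N, ((m:ℝ) * Pb (m-1) j.toNat x) * f m := by
    intro x j hj
    rw [hg]
    rw [Finset.sum_congr rfl (fun i hi =>
      hderiv_ft x i (by exact (Finset.mem_Icc.mp hi).1))]
    rw [sum_Icc_toNat (fun i => ∑ l ∈ Finset.range N, deriv (fun s => Pb l i.toNat s) x * f l) j hj]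
    simp only [Int.toNat_natCast]
    rw [Finset.sum_comm]
    rw [← Finset.sum_neg_distrib]
    refine Finset.sum_congr rfl fun m _ => ?_
    rw [← Finset.sum_mul, sum_deriv_Pb m j.toNat x]
    ring
  -- g vanishes for negative indices
  have hg_neg : ∀ (x : ℝ) (j : ℤ), j < 0 → g x j = 0 := by
    intro x j hj
    rw [hg, Finset.Icc_eq_empty (by omega)]
    simp
  -- main case split
  rcases lt_trichotomy k 0 with hk | hk | hk
  · -- k < 0 : both sides vanish
    rw [hft t k, if_pos hk, hg_neg t k hk]
    ring
  · -- k = 0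
    subst hk
    have h1 : h t (0-1 : ℤ) = 0 := by
      rw [hh, Finset.Icc_eq_empty (by omega)]; simp
    have h2 : g t (0-1 : ℤ) = 0 := hg_neg t _ (by omega)
    rw [h1, h2]; ring
  · -- k ≥ 1
    set K := k.toNat with hKdef
    have hK1 : 1 ≤ K := by omega
    have hk1 : (k - 1).toNat = K - 1 := by omega
    -- closed forms at the relevant points
    have Fk : ft t k = ∑ l ∈ Finset.range N, Pb l K t * f l := by
      rw [hft, if_neg (by omega)]; simp [Pb]; rfl
    have Gk : g t k = ∑ m ∈ Finset.range N, ((m:ℝ) * Pb (m-1) K t) * f m :=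
      hg_closed t k (by omega)
    have Gk1 : g t (k-1) = ∑ m ∈ Finset.range N, ((m:ℝ) * Pb (m-1) (K-1) t) * f m := by
      rw [hg_closed t (k-1) (by omega), hk1]
    -- closed form for h at k-1
    have hg_fun : ∀ j : ℤ, 0 ≤ j →
        (fun s => g s j) = (fun s => ∑ m ∈ Finset.range N, ((m:ℝ) * Pb (m-1) j.toNat s) * f m) := by
      intro j hj; funext s; exact hg_closed s j hj
    have hderiv_g : ∀ (j : ℤ), 0 ≤ j →
        deriv (fun s => g s j) t
          = ∑ m ∈ Finset.range N, ((m:ℝ) * deriv (fun s => Pb (m-1) j.toNat s) t) * f m := by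
      intro j hj
      rw [hg_fun j hj]
      have hD : HasDerivAt
          (fun s => ∑ m ∈ Finset.range N, ((m:ℝ) * Pb (m-1) j.toNat s) * f m)
          (∑ m ∈ Finset.range N,
            ((m:ℝ) * (((m-1).choose j.toNat : ℝ) * ((j.toNat:ℝ) * t^(j.toNat-1) * (1-t)^((m-1)-j.toNat)
              - (((m-1)-j.toNat : ℕ):ℝ) * t^j.toNat * (1-t)^((m-1)-j.toNat-1)))) * f m) t :=
        HasDerivAt.fun_sum (fun m _ =>
          ((hasDerivAt_Pb (m-1) j.toNat t).const_mul ((m:ℝ))).mul_const (f m))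
      rw [hD.deriv]
      exact Finset.sum_congr rfl fun m _ => by rw [(hasDerivAt_Pb (m-1) j.toNat t).deriv]
    have Hk1 : h t (k-1)
        = ∑ m ∈ Finset.range N, ((m:ℝ) * (((m:ℝ)-1) * Pb (m-2) (K-1) t)) * f m := by
      rw [hh]
      rw [Finset.sum_congr rfl (fun i hi =>
        hderiv_g i (by exact (Finset.mem_Icc.mp hi).1))]
      rw [sum_Icc_toNat (fun i =>
        ∑ m ∈ Finset.range N, ((m:ℝ) * deriv (fun s => Pb (m-1) i.toNat s) t) * f m)
        (k-1) (by omega)]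
      simp only [Int.toNat_natCast, hk1]
      rw [Finset.sum_comm]
      rw [← Finset.sum_neg_distrib]
      refine Finset.sum_congr rfl fun m hm => ?_
      have : ∑ j ∈ Finset.range (K-1+1), ((m:ℝ) * deriv (fun s => Pb (m-1) j s) t) * f m
          = ((m:ℝ) * ∑ j ∈ Finset.range (K-1+1), deriv (fun s => Pb (m-1) j s) t) * f m := by
        rw [Finset.mul_sum, Finset.sum_mul]
      rw [this, sum_deriv_Pb (m-1) (K-1) t]
      have e3 : m - 1 - 1 = m - 2 := by omega
      rw [e3]
      rcases Nat.eq_zero_or_pos m with hm0 | hm0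
      · subst hm0; simp
      · have : ((m - 1 : ℕ) : ℝ) = (m:ℝ) - 1 := by
          push_cast [hm0]; ring
        rw [this]; ring
    -- key identity (i): t * g(k-1) = K * ft(k)
    have key1 : t * g t (k-1) = (K:ℝ) * ft t k := by
      rw [Gk1, Fk, Finset.mul_sum, Finset.mul_sum]
      refine Finset.sum_congr rfl fun l _ => ?_
      have c1 := cast_id1 l K hK1
      have e1 : (l-1) - (K-1) = l - K := by omega
      have hp : t^K = t^(K-1) * t := by
        rw [← pow_succ]; congr 1; omega
      simp only [Pb, e1, hp]
      linear_combination (-(t^(K-1) * (1-t)^(l-K) * f l * t)) * c1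
    -- key identity (ii): t * h(k-1) = K * g(k)
    have key2 : t * h t (k-1) = (K:ℝ) * g t k := by
      rw [Hk1, Gk, Finset.mul_sum, Finset.mul_sum]
      refine Finset.sum_congr rfl fun m _ => ?_
      rcases Nat.eq_zero_or_pos m with hm0 | hm0
      · subst hm0; simp [Pb]
      have c1 := cast_id1 (m-1) K hK1
      have e3 : m - 1 - 1 = m - 2 := by omega
      have e1 : (m-2) - (K-1) = (m-1) - K := by omega
      have hcast : ((m - 1 : ℕ) : ℝ) = (m:ℝ) - 1 := by push_cast [hm0]; ring
      rw [e3, hcast] at c1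
      have hp : t^K = t^(K-1) * t := by
        rw [← pow_succ]; congr 1; omega
      simp only [Pb, e1, hp]
      linear_combination (-(t^(K-1) * (1-t)^((m-1)-K) * f m * (m:ℝ) * t)) * c1
    -- conclude
    by_cases ht0 : t = 0
    · have hP0 : ∀ l : ℕ, Pb l K (0:ℝ) = 0 := by
        intro l; simp [Pb, zero_pow (by omega : K ≠ 0)]
      subst ht0
      have f0 : ft 0 k = 0 := by rw [Fk]; simp [hP0]
      have g0 : g 0 k = 0 := by rw [Gk]; simp [hP0]
      rw [f0, g0]; ring
    · apply mul_left_cancel₀ ht0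
      calc t * (ft t k * h t (k - 1)) = ft t k * (t * h t (k-1)) := by ring
        _ = ft t k * ((K:ℝ) * g t k) := by rw [key2]
        _ = ((K:ℝ) * ft t k) * g t k := by ring
        _ = (t * g t (k-1)) * g t k := by rw [key1]
        _ = t * (g t k * g t (k - 1)) := by ring
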